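/- Let M be a square complex matrix with M² = 0, set S = M + Mᴴ and Q = M·Mᴴ + Mᴴ·M (so that S² = Q). Then for every complex number z, det(I + z·S)² = det(I − z²·Q). (This is the identity tr log(1 + λ(ℍ + ℍ*)) = ½ tr log(1 − λ²Q) obtained after integrating out the colors 1 and 2 in the bosonic colored group field theory.) -/

import Mathlib

open scoped Matrix
open Polynomial

lemma det_one_add_of_sq_zero {n : ℕ} (N : Matrix (Fin n) (Fin n) ℂ)
    (h : N * N = 0) : (1 + N).det = 1 := by
  have hnil : IsNilpotent N := ⟨2, by rw [pow_two]; exact h⟩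
  have hcp : N.charpoly = X ^ (Fintype.card (Fin n)) := by
    have h0 := (Matrix.isNilpotent_charpoly_sub_pow_of_isNilpotent hnil).eq_zero
    exact sub_eq_zero.mp h0
  have heval : N.charpoly.eval (-1) = ((Matrix.scalar (Fin n)) (-1) - N).det := by
    rw [Matrix.charpoly, _root_.eval_det, Matrix.matPolyEquiv_charmatrix]
    simp
  have hsc : (Matrix.scalar (Fin n)) (-1 : ℂ) - N = -(1 + N) := by
    rw [map_neg, map_one]; abel
  rw [hcp, hsc, Matrix.det_neg] at heval
  simp only [eval_pow, eval_X] at heval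
  exact (mul_left_cancel₀ (pow_ne_zero _ (by norm_num : (-1:ℂ) ≠ 0))
    ((mul_one _).trans heval)).symm

/-- If `M` is a square complex matrix with `M * M = 0`, `S = M + Mᴴ` and
`Q = M * Mᴴ + Mᴴ * M` (so that `S ^ 2 = Q`), then for every complex number `z`,
`det (I + z • S) ^ 2 = det (I - z ^ 2 • Q)`. -/
theorem det_one_add_smul_sq_eq_det_one_sub_sq_smul {n : ℕ}
    (M : Matrix (Fin n) (Fin n) ℂ) (hM : M * M = 0) (z : ℂ) :
    (1 + z • (M + Mᴴ)).det ^ 2 = (1 - z ^ 2 • (M * Mᴴ + Mᴴ * M)).det := by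
  have hMH : Mᴴ * Mᴴ = 0 := by
    rw [← Matrix.conjTranspose_mul, hM, Matrix.conjTranspose_zero]
  set A : Matrix (Fin n) (Fin n) ℂ := z • M with hAdef
  set B : Matrix (Fin n) (Fin n) ℂ := z • Mᴴ with hBdef
  have hA : A * A = 0 := by
    simp [hAdef, Matrix.smul_mul, Matrix.mul_smul, hM]
  have hB : B * B = 0 := by
    simp [hBdef, Matrix.smul_mul, Matrix.mul_smul, hMH]
  have key1 : (1 - B) * ((1 + (A + B)) * (1 - A)) = 1 - B * A := by
    have e : (1 - B) * ((1 + (A + B)) * (1 - A))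
        = 1 - B * A - A * A - B * B + B * B * A + B * (A * A) := by noncomm_ring
    rw [e, hA, hB]; noncomm_ring
  have key2 : (1 - A) * ((1 + (A + B)) * (1 - B)) = 1 - A * B := by
    have e : (1 - A) * ((1 + (A + B)) * (1 - B))
        = 1 - A * B - B * B - A * A + A * A * B + A * (B * B) := by noncomm_ring
    rw [e, hA, hB]; noncomm_ring
  have dA : (1 - A).det = 1 := by
    have := det_one_add_of_sq_zero (-A) (by rw [neg_mul_neg, hA])
    simpa [sub_eq_add_neg] using this
  have dB : (1 - B).det = 1 := by
    have := det_one_add_of_sq_zero (-B) (by rw [neg_mul_neg, hB])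
    simpa [sub_eq_add_neg] using this
  have e1 : (1 + (A + B)).det = (1 - B * A).det := by
    have := congrArg Matrix.det key1
    rwa [Matrix.det_mul, Matrix.det_mul, dA, dB, one_mul, mul_one] at this
  have e2 : (1 + (A + B)).det = (1 - A * B).det := by
    have := congrArg Matrix.det key2
    rwa [Matrix.det_mul, Matrix.det_mul, dA, dB, one_mul, mul_one] at this
  have prod : (1 - A * B) * (1 - B * A) = 1 - (A * B + B * A) := by
    have e : (1 - A * B) * (1 - B * A)
        = 1 - (A * B + B * A) + A * (B * B) * A := by noncomm_ring
    rw [e, hB]; noncomm_ring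
  have hgoal1 : 1 + z • (M + Mᴴ) = 1 + (A + B) := by rw [smul_add]
  have hgoal2 : z ^ 2 • (M * Mᴴ + Mᴴ * M) = A * B + B * A := by
    simp [hAdef, hBdef, smul_add, Matrix.smul_mul, Matrix.mul_smul, smul_smul, pow_two]
  rw [hgoal1, hgoal2, pow_two]
  nth_rewrite 1 [e2]
  rw [e1, ← Matrix.det_mul, prod]
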